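/- arXiv:2509.04668 — 4 statements merged into one kernel-verified Lean document; each statement's English description precedes it below -/
import Mathlib

section
/- Let H be a real Hilbert space (or ℝ^d), C > 0, and k ≥ 2 a real number. Let z be a Bochner-integrable H-valued random vector with mean E[z] = ν and E[‖z‖^k] ≤ r^{(k)} < ∞. Then the clipped vector Π_C(z) satisfies ‖ E[Π_C(z)] − ν ‖ ≤ r^{(k)} / ((k−1)·C^{k−1}). -/
open MeasureTheory

/-- Projection onto the closed ball of radius `C` centered at the origin. -/
noncomputable def clip {H : Type*} [NormedAddCommGroup H] [NormedSpace ℝ H]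
    (C : ℝ) (z : H) : H :=
  if ‖z‖ ≤ C then z else (C / ‖z‖) • z

lemma norm_clip_le {H : Type*} [NormedAddCommGroup H] [NormedSpace ℝ H]
    (C : ℝ) (hC : 0 ≤ C) (z : H) : ‖clip C z‖ ≤ ‖z‖ := by
  unfold clip
  split_ifs with h
  · exact le_rfl
  · push_neg at h
    have hz : 0 < ‖z‖ := lt_of_le_of_lt hC h
    rw [norm_smul, Real.norm_eq_abs, abs_of_nonneg (div_nonneg hC hz.le)]
    rw [div_mul_cancel₀ _ hz.ne']
    exact h.le

lemma clip_eq {H : Type*} [NormedAddCommGroup H] [NormedSpace ℝ H]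
    (C : ℝ) (hC : 0 < C) : clip (H := H) C = fun z => (min 1 (C / ‖z‖)) • z := by
  funext z
  unfold clip
  by_cases hz : z = 0
  · simp [hz, hC.le]
  · have hz' : 0 < ‖z‖ := norm_pos_iff.mpr hz
    split_ifs with h
    · have : (1 : ℝ) ≤ C / ‖z‖ := (one_le_div hz').mpr h
      rw [min_eq_left this, one_smul]
    · push_neg at h
      have : C / ‖z‖ ≤ 1 := (div_le_one hz').mpr h.le
      rw [min_eq_right this]

lemma continuous_clip {H : Type*} [NormedAddCommGroup H] [NormedSpace ℝ H]
    (C : ℝ) (hC : 0 < C) : Continuous (clip (H := H) C) := by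
  rw [clip_eq C hC, continuous_iff_continuousAt]
  intro z
  by_cases hz : z = 0
  · subst hz
    have h0 : (min 1 (C / ‖(0:H)‖)) • (0:H) = 0 := smul_zero _
    rw [ContinuousAt, h0]
    apply squeeze_zero_norm (a := fun w : H => ‖w‖) ?_ tendsto_norm_zero
    intro w
    rw [norm_smul, Real.norm_eq_abs]
    by_cases hw : w = 0
    · simp [hw]
    · have hw' : 0 < ‖w‖ := norm_pos_iff.mpr hw
      have h1 : |min 1 (C / ‖w‖)| ≤ 1 := by
        rw [abs_of_nonneg (le_min zero_le_one (div_nonneg hC.le hw'.le))]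
        exact min_le_left _ _
      calc |min 1 (C / ‖w‖)| * ‖w‖ ≤ 1 * ‖w‖ :=
            mul_le_mul_of_nonneg_right h1 hw'.le
        _ = ‖w‖ := one_mul _
  · have hz' : (0:ℝ) < ‖z‖ := norm_pos_iff.mpr hz
    apply ContinuousAt.smul
    · exact (continuousAt_const.min (continuousAt_const.div
        (continuous_norm.continuousAt) hz'.ne'))
    · exact continuousAt_id

lemma key_ineq {x C k : ℝ} (hC : 0 < C) (hx : C < x) (hk : 2 ≤ k) :
    x - C ≤ x ^ k / ((k - 1) * C ^ (k - 1)) := by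
  have hx0 : 0 < x := hC.trans hx
  have hD : 0 < (k - 1) * C ^ (k - 1) :=
    mul_pos (by linarith) (Real.rpow_pos_of_pos hC _)
  rw [le_div_iff₀ hD]
  have ht : 1 ≤ x / C := (one_le_div hC).mpr hx.le
  have ha : 0 ≤ x / C - 1 := by linarith
  have hbern : 1 + k * (x / C - 1) ≤ (1 + (x / C - 1)) ^ k :=
    one_add_mul_self_le_rpow_one_add (by linarith) (by linarith)
  rw [show (1 : ℝ) + (x / C - 1) = x / C by ring,
    Real.div_rpow hx0.le hC.le] at hbern
  have h5 : (k - 1) * (x / C - 1) ≤ x ^ k / C ^ k := by nlinarith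
  have hCk' : 0 < C ^ k := Real.rpow_pos_of_pos hC _
  have h4 : (k - 1) * (x / C - 1) * C ^ k ≤ x ^ k := (le_div_iff₀ hCk').mp h5
  have hCk : C ^ k = C ^ (k - 1) * C := by
    have := Real.rpow_add_one hC.ne' (k - 1)
    rwa [show k - 1 + 1 = k by ring] at this
  calc (x - C) * ((k - 1) * C ^ (k - 1))
      = (k - 1) * (x / C - 1) * C ^ k := by
        rw [hCk]; field_simp
    _ ≤ x ^ k := h4

lemma clip_dist_le {H : Type*} [NormedAddCommGroup H] [NormedSpace ℝ H]
    {C k : ℝ} (hC : 0 < C) (hk : 2 ≤ k) (x : H) :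
    ‖clip C x - x‖ ≤ ‖x‖ ^ k / ((k - 1) * C ^ (k - 1)) := by
  have hD : 0 < (k - 1) * C ^ (k - 1) :=
    mul_pos (by linarith) (Real.rpow_pos_of_pos hC _)
  unfold clip
  split_ifs with h
  · simp only [sub_self, norm_zero]
    positivity
  · push_neg at h
    have hx' : 0 < ‖x‖ := hC.trans h
    have : (C / ‖x‖) • x - x = (C / ‖x‖ - 1) • x := by
      rw [sub_smul, one_smul]
    rw [this, norm_smul, Real.norm_eq_abs,
      abs_of_nonpos (by rw [sub_nonpos, div_le_one hx']; exact h.le)]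
    have heq : -(C / ‖x‖ - 1) * ‖x‖ = ‖x‖ - C := by
      field_simp
      ring
    rw [heq]
    exact key_ineq hC h hk

/-- The bias of the clipped random vector is bounded by the k-th moment:
‖E[Π_C(z)] − ν‖ ≤ r^{(k)} / ((k−1)·C^{k−1}) when E[z] = ν and E[‖z‖^k] ≤ r^{(k)}. -/
theorem clip_bias_bound {Ω : Type*} [MeasurableSpace Ω]
    (P : Measure Ω) [IsProbabilityMeasure P]
    {H : Type*} [NormedAddCommGroup H] [InnerProductSpace ℝ H] [CompleteSpace H]
    (C : ℝ) (hC : 0 < C) (k : ℝ) (hk : 2 ≤ k)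
    (z : Ω → H) (hz : Integrable z P)
    (ν : H) (hν : (∫ ω, z ω ∂P) = ν)
    (r : ℝ) (hmom : Integrable (fun ω => ‖z ω‖ ^ k) P)
    (hr : (∫ ω, ‖z ω‖ ^ k ∂P) ≤ r) :
    ‖(∫ ω, clip C (z ω) ∂P) - ν‖ ≤ r / ((k - 1) * C ^ (k - 1)) := by
  have hD : 0 < (k - 1) * C ^ (k - 1) :=
    mul_pos (by linarith) (Real.rpow_pos_of_pos hC _)
  have hclip_meas : AEStronglyMeasurable (fun ω => clip C (z ω)) P :=
    (continuous_clip C hC).comp_aestronglyMeasurable hz.1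
  have hclip_int : Integrable (fun ω => clip C (z ω)) P :=
    hz.norm.mono' hclip_meas (Filter.Eventually.of_forall fun ω => norm_clip_le C hC.le _)
  rw [← hν, ← integral_sub hclip_int hz]
  calc ‖∫ ω, (clip C (z ω) - z ω) ∂P‖
      ≤ ∫ ω, ‖clip C (z ω) - z ω‖ ∂P := norm_integral_le_integral_norm _
    _ ≤ ∫ ω, ‖z ω‖ ^ k / ((k - 1) * C ^ (k - 1)) ∂P := by
        apply integral_mono ((hclip_int.sub hz).norm) (hmom.div_const _)
        intro ω
        exact clip_dist_le hC hk (z ω)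
    _ = (∫ ω, ‖z ω‖ ^ k ∂P) / ((k - 1) * C ^ (k - 1)) := integral_div _ _
    _ ≤ r / ((k - 1) * C ^ (k - 1)) := by gcongr
end

section
/- Let θ > 1, let l ≥ 1 be an integer, and let Δ_1, …, Δ_l and E_1, …, E_l be positive real numbers such that for every i with 2 ≤ i ≤ l: Δ_i ≤ (Δ_{i−1}·E_i)^{1/θ} and E_i ≥ 2^{−θ}·E_{i−1}. Set K := 2^{θ/(θ−1)²}. Then Δ_l / ( K · E_l^{1/(θ−1)} ) ≤ ( Δ_1 / ( K · E_1^{1/(θ−1)} ) )^{1/θ^{l−1}}. -/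
open Real

lemma phase_step (θ : ℝ) (hθ : 1 < θ) (a b e f : ℝ)
    (ha : 0 < a) (hb : 0 < b) (he : 0 < e) (hf : 0 < f)
    (h1 : b ≤ (a * f) ^ (1 / θ)) (h2 : f ≥ 2 ^ (-θ) * e) :
    b / (2 ^ (θ / (θ - 1) ^ 2) * f ^ (1 / (θ - 1)))
      ≤ (a / (2 ^ (θ / (θ - 1) ^ 2) * e ^ (1 / (θ - 1)))) ^ (1 / θ) := by
  have hθ0 : (0:ℝ) < θ := by linarith
  have hd0 : (0:ℝ) < θ - 1 := by linarith
  have h2pos : (0:ℝ) < 2 := by norm_num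
  have hK : (0:ℝ) < 2 ^ (θ / (θ - 1) ^ 2) := rpow_pos_of_pos h2pos _
  have hfe : (0:ℝ) < f ^ (1 / (θ - 1)) := rpow_pos_of_pos hf _
  have hee : (0:ℝ) < e ^ (1 / (θ - 1)) := rpow_pos_of_pos he _
  have hLpos : 0 < b / (2 ^ (θ / (θ - 1) ^ 2) * f ^ (1 / (θ - 1))) := by positivity
  have hRbase : 0 < a / (2 ^ (θ / (θ - 1) ^ 2) * e ^ (1 / (θ - 1))) := by positivity
  have hRpos : 0 < (a / (2 ^ (θ / (θ - 1) ^ 2) * e ^ (1 / (θ - 1)))) ^ (1 / θ) :=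
    rpow_pos_of_pos hRbase _
  rw [← log_le_log_iff hLpos hRpos, log_rpow hRbase, log_div hb.ne' (by positivity),
    log_div ha.ne' (by positivity), log_mul hK.ne' hfe.ne', log_mul hK.ne' hee.ne',
    log_rpow h2pos, log_rpow hf, log_rpow he]
  set A := Real.log a
  set B := Real.log b
  set Ee := Real.log e
  set F := Real.log f
  set L := Real.log 2 with hL
  have hL0 : 0 < L := by rw [hL]; exact Real.log_pos (by norm_num)
  -- hypotheses in log form
  have h1' : θ * B ≤ A + F := by
    have := Real.log_le_log hb h1
    rw [log_rpow (by positivity), log_mul ha.ne' hf.ne'] at this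
    have : B ≤ 1 / θ * (A + F) := this
    calc θ * B ≤ θ * (1 / θ * (A + F)) := by
          exact (mul_le_mul_iff_right₀ hθ0).mpr this
      _ = A + F := by field_simp
  have h2' : Ee - θ * L ≤ F := by
    have := Real.log_le_log (by positivity) h2
    rw [log_mul (by positivity) he.ne', log_rpow h2pos] at this
    linarith
  -- cleared-denominator key inequality
  have key : θ * (θ-1)^2 * B - θ^2 * L - θ * (θ-1) * F
      ≤ (θ-1)^2 * A - θ * L - (θ-1) * Ee := by
    nlinarith [mul_le_mul_of_nonneg_left h1' (sq_nonneg (θ-1)),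
      mul_le_mul_of_nonneg_left h2' hd0.le]
  have hpos : (0:ℝ) < θ * (θ-1)^2 := by positivity
  rw [show B - (θ / (θ-1)^2 * L + 1/(θ-1) * F)
      = (θ * (θ-1)^2 * B - θ^2 * L - θ * (θ-1) * F) / (θ * (θ-1)^2) by
        field_simp; ring,
    show 1/θ * (A - (θ / (θ-1)^2 * L + 1/(θ-1) * Ee))
      = ((θ-1)^2 * A - θ * L - (θ-1) * Ee) / (θ * (θ-1)^2) by
        field_simp; ring]
  exact (div_le_div_iff_of_pos_right hpos).mpr key

/-- Iterated contraction bound for the phase recursion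
Δ_i ≤ (Δ_{i−1}E_i)^{1/θ} with E_i ≥ 2^{−θ}E_{i−1}, where K = 2^{θ/(θ−1)²}. -/
theorem phase_contraction_iterated (θ : ℝ) (hθ : 1 < θ) (l : ℕ) (hl : 1 ≤ l)
    (Δ E : ℕ → ℝ)
    (hΔpos : ∀ i, 1 ≤ i → i ≤ l → 0 < Δ i) (hEpos : ∀ i, 1 ≤ i → i ≤ l → 0 < E i)
    (hrec : ∀ i, 2 ≤ i → i ≤ l → Δ i ≤ (Δ (i - 1) * E i) ^ (1 / θ))
    (hEgrow : ∀ i, 2 ≤ i → i ≤ l → E i ≥ 2 ^ (-θ) * E (i - 1)) :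
    Δ l / (2 ^ (θ / (θ - 1) ^ 2) * E l ^ (1 / (θ - 1)))
      ≤ (Δ 1 / (2 ^ (θ / (θ - 1) ^ 2) * E 1 ^ (1 / (θ - 1)))) ^ (1 / θ ^ (l - 1)) := by
  have hθ0 : (0:ℝ) < θ := by linarith
  set D : ℕ → ℝ := fun i => Δ i / (2 ^ (θ / (θ - 1) ^ 2) * E i ^ (1 / (θ - 1))) with hD
  have hDpos : ∀ i, 1 ≤ i → i ≤ l → 0 < D i := by
    intro i h1i hil
    have := hΔpos i h1i hil
    have := hEpos i h1i hil
    have : (0:ℝ) < 2 ^ (θ / (θ - 1) ^ 2) := rpow_pos_of_pos (by norm_num) _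
    positivity
  have main : ∀ n, 1 ≤ n → n ≤ l → D n ≤ D 1 ^ (1 / θ ^ (n - 1)) := by
    intro n hn
    induction n, hn using Nat.le_induction with
    | base =>
      intro h1l
      simp only [Nat.sub_self, pow_zero]
      rw [show (1:ℝ)/1 = 1 by norm_num, rpow_one]
    | succ n hn ih =>
      intro hnl
      have hnl' : n ≤ l := by omega
      have h2n : 2 ≤ n + 1 := by omega
      have step := phase_step θ hθ (Δ n) (Δ (n+1)) (E n) (E (n+1))
        (hΔpos n hn hnl') (hΔpos (n+1) (by omega) hnl)
        (hEpos n hn hnl') (hEpos (n+1) (by omega) hnl)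
        (by simpa using hrec (n+1) h2n hnl)
        (by simpa using hEgrow (n+1) h2n hnl)
      have ih' := ih hnl'
      have hD1 : 0 < D 1 := hDpos 1 le_rfl (by omega)
      calc D (n+1) ≤ D n ^ (1/θ) := step
        _ ≤ (D 1 ^ (1 / θ ^ (n-1))) ^ (1/θ) := by
            apply rpow_le_rpow (hDpos n hn hnl').le ih' (by positivity)
        _ = D 1 ^ (1 / θ ^ n) := by
            rw [← Real.rpow_mul hD1.le]
            congr 1
            rw [div_mul_div_comm, one_mul, ← pow_succ,
              show n - 1 + 1 = n by omega]

  have := main l hl le_rfl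
  simpa [hD] using this
end

section
/- Let H be a real normed vector space, θ > 1, λ > 0, a > 0, R₀ > 0, and m ≥ 1 an integer. Let F : H → ℝ and w* ∈ H satisfy F(w) − F(w*) ≥ λ‖w − w*‖^θ for all w ∈ H. Define R_k := 2^{−k}R₀, μ₀ := 2R₀^{1−θ}a, and μ_k := 2^{(θ−1)k}μ₀. Let ŵ₀, ŵ₁, …, ŵ_m ∈ H with ‖ŵ₀ − w*‖ ≤ R₀, and assume that for every k with 1 ≤ k ≤ m: (i) if ‖ŵ_{k−1} − w*‖ ≤ R_{k−1} then F(ŵ_k) − F(w*) ≤ R_{k−1}·a; and (ii) F(ŵ_k) − F(ŵ_{k−1}) ≤ R_{k−1}·a. Let k* ∈ {1, …, m} satisfy μ_{k*} ≤ λ ≤ 2^{θ−1}μ_{k*}. Then: for every k with 1 ≤ k ≤ k*, ‖ŵ_{k−1} − w*‖ ≤ R_{k−1} and F(ŵ_k) − F(w*) ≤ μ_k R_k^θ = 2^{−k}μ₀R₀^θ; moreover, for every k with k* ≤ k ≤ m, F(ŵ_k) − F(ŵ_{k*}) ≤ μ_{k*} R_{k*}^θ. -/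
private lemma key_identity (θ a R0 : ℝ) (hR0 : 0 < R0) (k : ℕ) :
    2 * R0 ^ (1 - θ) * a * 2 ^ ((θ - 1) * (k : ℝ)) * (R0 / (2 : ℝ) ^ k) ^ θ
      = 2 * a * R0 / (2 : ℝ) ^ k := by
  have h2 : (0:ℝ) < 2 := two_pos
  rw [Real.div_rpow hR0.le (by positivity), ← Real.rpow_natCast (2:ℝ) k,
     ← Real.rpow_mul h2.le, div_eq_mul_inv, ← Real.rpow_neg h2.le]
  have e : 2 * R0 ^ (1 - θ) * a * 2 ^ ((θ - 1) * (k:ℝ)) * (R0 ^ θ * 2 ^ (-((k:ℝ) * θ)))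
      = (2*a) * (R0^(1-θ) * R0^θ) * ((2:ℝ)^((θ-1)*(k:ℝ)) * 2^(-((k:ℝ)*θ))) := by ring
  rw [e, ← Real.rpow_add hR0, ← Real.rpow_add h2,
     show 1 - θ + θ = 1 by ring, show (θ - 1) * (k:ℝ) + -((k:ℝ)*θ) = -(k:ℝ) by ring,
     Real.rpow_one, Real.rpow_neg h2.le, Real.rpow_natCast]
  ring

/-- Induction lemma for the localized multi-phase method under the
(θ, λ)-TNC, with R_k = 2^{−k}R₀, μ₀ = 2R₀^{1−θ}a and μ_k = 2^{(θ−1)k}μ₀: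
up to phase k* (where μ_{k*} ≤ λ ≤ 2^{θ−1}μ_{k*}) the iterates stay localized with
exponentially decreasing excess risk, and afterwards the excess risk relative to
ŵ_{k*} stays below μ_{k*}R_{k*}^θ. -/
theorem localized_phases_induction {H : Type*} [NormedAddCommGroup H] [NormedSpace ℝ H]
    (θ lam a R0 : ℝ) (hθ : 1 < θ) (hlam : 0 < lam) (ha : 0 < a) (hR0 : 0 < R0)
    (m : ℕ) (hm : 1 ≤ m)
    (F : H → ℝ) (wstar : H)
    (hTNC : ∀ w : H, F w - F wstar ≥ lam * ‖w - wstar‖ ^ θ)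
    (what : ℕ → H) (h0 : ‖what 0 - wstar‖ ≤ R0)
    (hi : ∀ k, 1 ≤ k → k ≤ m → ‖what (k - 1) - wstar‖ ≤ R0 / (2 : ℝ) ^ (k - 1) →
      F (what k) - F wstar ≤ R0 / (2 : ℝ) ^ (k - 1) * a)
    (hii : ∀ k, 1 ≤ k → k ≤ m →
      F (what k) - F (what (k - 1)) ≤ R0 / (2 : ℝ) ^ (k - 1) * a)
    (kstar : ℕ) (hk1 : 1 ≤ kstar) (hkm : kstar ≤ m)
    (hkslo : 2 * R0 ^ (1 - θ) * a * 2 ^ ((θ - 1) * (kstar : ℝ)) ≤ lam)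
    (hkshi : lam ≤ 2 ^ (θ - 1) * (2 * R0 ^ (1 - θ) * a * 2 ^ ((θ - 1) * (kstar : ℝ)))) :
    (∀ k, 1 ≤ k → k ≤ kstar →
      ‖what (k - 1) - wstar‖ ≤ R0 / (2 : ℝ) ^ (k - 1) ∧
      F (what k) - F wstar ≤
        2 * R0 ^ (1 - θ) * a * 2 ^ ((θ - 1) * (k : ℝ)) * (R0 / (2 : ℝ) ^ k) ^ θ ∧
      2 * R0 ^ (1 - θ) * a * 2 ^ ((θ - 1) * (k : ℝ)) * (R0 / (2 : ℝ) ^ k) ^ θ =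
        2 ^ (-(k : ℝ)) * (2 * R0 ^ (1 - θ) * a) * R0 ^ θ) ∧
    (∀ k, kstar ≤ k → k ≤ m →
      F (what k) - F (what kstar) ≤
        2 * R0 ^ (1 - θ) * a * 2 ^ ((θ - 1) * (kstar : ℝ)) * (R0 / (2 : ℝ) ^ kstar) ^ θ) := by
  have h2 : (0:ℝ) < 2 := two_pos
  have hθ0 : 0 < θ := lt_trans one_pos hθ
  have key := fun k => key_identity θ a R0 hR0 k
  -- μ_k ≤ lam for k ≤ kstar
  have hmono : ∀ k : ℕ, k ≤ kstar → 2 * R0 ^ (1 - θ) * a * 2 ^ ((θ - 1) * (k : ℝ)) ≤ lam := by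
    intro k hk
    refine le_trans ?_ hkslo
    have : (θ - 1) * (k : ℝ) ≤ (θ - 1) * (kstar : ℝ) := by
      apply mul_le_mul_of_nonneg_left (by exact_mod_cast hk) (by linarith)
    have := Real.rpow_le_rpow_of_exponent_le (by norm_num : (1:ℝ) ≤ 2) this
    have hpos : (0:ℝ) < 2 * R0 ^ (1 - θ) * a := by positivity
    nlinarith [Real.rpow_pos_of_pos h2 ((θ - 1) * (k:ℝ))]
  -- localization
  have hloc : ∀ k : ℕ, k ≤ kstar → ‖what k - wstar‖ ≤ R0 / (2 : ℝ) ^ k := by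
    intro k
    induction k with
    | zero => intro _; simpa using h0
    | succ n ih =>
      intro hk
      have hn : n ≤ kstar := Nat.le_of_succ_le hk
      have hFb := hi (n+1) (Nat.le_add_left 1 n) (le_trans hk hkm) (by simpa using ih hn)
      simp only [Nat.add_sub_cancel] at hFb
      -- R0/2^n * a = μ_{n+1} (R0/2^{n+1})^θ
      have e : R0 / (2:ℝ) ^ n * a
          = 2 * R0 ^ (1 - θ) * a * 2 ^ ((θ - 1) * ((n+1 : ℕ) : ℝ)) * (R0 / (2:ℝ) ^ (n+1)) ^ θ := by
        rw [key (n+1)]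
        rw [pow_succ]
        field_simp
      have hμ := hmono (n+1) hk
      have hRpow : (0:ℝ) < (R0 / (2:ℝ) ^ (n+1)) ^ θ := Real.rpow_pos_of_pos (by positivity) θ
      have h1 : lam * ‖what (n+1) - wstar‖ ^ θ ≤ lam * (R0 / (2:ℝ) ^ (n+1)) ^ θ := by
        calc lam * ‖what (n+1) - wstar‖ ^ θ ≤ F (what (n+1)) - F wstar := hTNC _
          _ ≤ R0 / (2:ℝ) ^ n * a := hFb
          _ = 2 * R0 ^ (1 - θ) * a * 2 ^ ((θ - 1) * ((n+1:ℕ):ℝ)) * (R0 / (2:ℝ) ^ (n+1)) ^ θ := e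
          _ ≤ lam * (R0 / (2:ℝ) ^ (n+1)) ^ θ := by
              apply mul_le_mul_of_nonneg_right hμ hRpow.le
      have h2' : ‖what (n+1) - wstar‖ ^ θ ≤ (R0 / (2:ℝ) ^ (n+1)) ^ θ :=
        le_of_mul_le_mul_left h1 hlam
      by_contra hc
      push_neg at hc
      have := Real.rpow_lt_rpow (by positivity) hc hθ0
      push_cast at this h2'
      linarith
  constructor
  · intro k hk1' hkk
    obtain ⟨n, rfl⟩ := Nat.exists_eq_add_of_le' hk1'
    simp only [Nat.add_sub_cancel] at *
    have hloc_n : ‖what n - wstar‖ ≤ R0 / (2:ℝ) ^ n := hloc n (by omega)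
    refine ⟨hloc_n, ?_, ?_⟩
    · have hFb := hi (n+1) (Nat.le_add_left 1 n) (le_trans hkk hkm) (by simpa using hloc_n)
      simp only [Nat.add_sub_cancel] at hFb
      have e : R0 / (2:ℝ) ^ n * a
          = 2 * R0 ^ (1 - θ) * a * 2 ^ ((θ - 1) * ((n+1 : ℕ) : ℝ)) * (R0 / (2:ℝ) ^ (n+1)) ^ θ := by
        rw [key (n+1), pow_succ]
        field_simp
      linarith [e ▸ hFb]
    · rw [key (n+1), Real.rpow_neg h2.le, Real.rpow_natCast]
      have e2 : 2 * R0 ^ (1 - θ) * a * R0 ^ θ = 2 * a * R0 := by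
        rw [show 2 * R0 ^ (1 - θ) * a * R0 ^ θ = 2 * a * (R0 ^ (1-θ) * R0 ^ θ) by ring,
           ← Real.rpow_add hR0, show (1:ℝ) - θ + θ = 1 by ring, Real.rpow_one]
      field_simp
      nlinarith [e2, pow_pos h2 (n+1)]
  · -- second part
    have main : ∀ k : ℕ, kstar ≤ k → k ≤ m →
        F (what k) - F (what kstar) ≤ 2 * a * R0 / (2:ℝ) ^ kstar - 2 * a * R0 / (2:ℝ) ^ k := by
      intro k
      induction k with
      | zero => intro h _; omega
      | succ n ih =>
        intro hks hnm
        rcases Nat.lt_or_ge n kstar with hlt | hge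
        · have : kstar = n + 1 := by omega
          subst this
          simp
        · have hprev := ih hge (by omega)
          have hstep := hii (n+1) (Nat.le_add_left 1 n) hnm
          simp only [Nat.add_sub_cancel] at hstep
          have e : R0 / (2:ℝ) ^ n * a = 2 * a * R0 / (2:ℝ) ^ (n+1) := by
            rw [pow_succ]; field_simp
          rw [e] at hstep
          have hhalf : 2 * a * R0 / (2:ℝ) ^ n
              = 2 * a * R0 / (2:ℝ) ^ (n+1) + 2 * a * R0 / (2:ℝ) ^ (n+1) := by
            rw [pow_succ]
            have : ((2:ℝ) ^ n) ≠ 0 := (pow_pos h2 n).ne'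
            field_simp
            ring
          linarith
    intro k hks hkm'
    have := main k hks hkm'
    rw [key kstar]
    have hk2 : (0:ℝ) < (2:ℝ) ^ k := pow_pos h2 k
    have : 2 * a * R0 / (2:ℝ) ^ k ≥ 0 := by positivity
    linarith [main k hks hkm']
end

section
/- Let H be a real normed vector space, θ > 1, λ > 0, a > 0, R₀ > 0, and m ≥ 1 an integer. Let F : H → ℝ and w* ∈ H satisfy F(w) − F(w*) ≥ λ‖w − w*‖^θ for all w ∈ H. Define R_k := 2^{−k}R₀. Let ŵ₀, ŵ₁, …, ŵ_m ∈ H with ‖ŵ₀ − w*‖ ≤ R₀, and assume that for every k with 1 ≤ k ≤ m: (i) if ‖ŵ_{k−1} − w*‖ ≤ R_{k−1} then F(ŵ_k) − F(w*) ≤ R_{k−1}·a; and (ii) F(ŵ_k) − F(ŵ_{k−1}) ≤ R_{k−1}·a. If additionally λ ≤ 2^{(θ−1)m+1}·R₀^{1−θ}·a, then F(ŵ_m) − F(w*) ≤ 4·(1/λ)^{1/(θ−1)}·(2a)^{θ/(θ−1)}. -/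
lemma aux_final (θ lam a R X : ℝ) (hθ : 1 < θ) (hlam : 0 < lam) (ha : 0 < a) (hR : 0 < R)
    (hcond : lam * R ^ (θ - 1) ≤ 2 ^ θ * a) (hX : X ≤ 2 * R * a) :
    X ≤ 4 * (1 / lam) ^ (1 / (θ - 1)) * (2 * a) ^ (θ / (θ - 1)) := by
  have ht : 0 < θ - 1 := by linarith
  set t := 1 / (θ - 1) with htdef
  have htpos : 0 < t := by positivity
  have hmul : (θ - 1) * t = 1 := by rw [htdef, mul_one_div_cancel ht.ne']
  have hRle : R ≤ (2 ^ θ * a / lam) ^ t := by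
    have h1 : R ^ (θ - 1) ≤ 2 ^ θ * a / lam := by
      rw [le_div_iff₀ hlam]; linarith
    calc R = (R ^ (θ - 1)) ^ t := by
            rw [← Real.rpow_mul hR.le, hmul, Real.rpow_one]
      _ ≤ (2 ^ θ * a / lam) ^ t := Real.rpow_le_rpow (by positivity) h1 htpos.le
  have e1 : (2 ^ θ * a / lam : ℝ) ^ t = (2 : ℝ) ^ (θ * t) * a ^ t * (1 / lam) ^ t := by
    rw [Real.div_rpow (by positivity) hlam.le,
        Real.mul_rpow (by positivity) ha.le,
        ← Real.rpow_mul (by norm_num : (0:ℝ) ≤ 2)]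
    rw [div_eq_mul_inv, one_div, Real.inv_rpow hlam.le]
  have hθt : θ / (θ - 1) = θ * t := by rw [htdef, mul_one_div]
  have e2 : (2 * a : ℝ) ^ (θ / (θ - 1)) = (2 : ℝ) ^ (θ * t) * (a * a ^ t) := by
    rw [hθt, Real.mul_rpow (by norm_num) ha.le]
    congr 1
    have : θ * t = 1 + t := by
      have : θ * t = (θ - 1) * t + t := by ring
      rw [this, hmul]
    rw [this, Real.rpow_add ha, Real.rpow_one]
  have h2 : X ≤ 2 * ((2 : ℝ) ^ (θ * t) * a ^ t * (1 / lam) ^ t) * a := by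
    have := mul_le_mul_of_nonneg_right (mul_le_mul_of_nonneg_left hRle (by norm_num : (0:ℝ) ≤ 2)) ha.le
    rw [e1] at this
    linarith
  rw [e2]
  have p1 : (0:ℝ) < (2 : ℝ) ^ (θ * t) := by positivity
  have p2 : (0:ℝ) < a ^ t := by positivity
  have p3 : (0:ℝ) < (1 / lam) ^ t := by positivity
  nlinarith [mul_pos (mul_pos p1 p2) (mul_pos p3 ha)]

/-- Fast excess-risk rate of the localized multi-phase method under the
(θ, λ)-TNC: if additionally λ ≤ 2^{(θ−1)m+1}·R₀^{1−θ}·a, then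
F(ŵ_m) − F(w*) ≤ 4·(1/λ)^{1/(θ−1)}·(2a)^{θ/(θ−1)}. -/
theorem localized_phases_rate {H : Type*} [NormedAddCommGroup H] [NormedSpace ℝ H]
    (θ lam a R0 : ℝ) (hθ : 1 < θ) (hlam : 0 < lam) (ha : 0 < a) (hR0 : 0 < R0)
    (m : ℕ) (hm : 1 ≤ m)
    (F : H → ℝ) (wstar : H)
    (hTNC : ∀ w : H, F w - F wstar ≥ lam * ‖w - wstar‖ ^ θ)
    (what : ℕ → H) (h0 : ‖what 0 - wstar‖ ≤ R0)
    (hi : ∀ k, 1 ≤ k → k ≤ m → ‖what (k - 1) - wstar‖ ≤ R0 / (2 : ℝ) ^ (k - 1) →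
      F (what k) - F wstar ≤ R0 / (2 : ℝ) ^ (k - 1) * a)
    (hii : ∀ k, 1 ≤ k → k ≤ m →
      F (what k) - F (what (k - 1)) ≤ R0 / (2 : ℝ) ^ (k - 1) * a)
    (hextra : lam ≤ 2 ^ ((θ - 1) * (m : ℝ) + 1) * R0 ^ (1 - θ) * a) :
    F (what m) - F wstar ≤
      4 * (1 / lam) ^ (1 / (θ - 1)) * (2 * a) ^ (θ / (θ - 1)) := by
  classical
  have hθ0 : (0:ℝ) < θ := by linarith
  have hRpos : ∀ k : ℕ, (0:ℝ) < R0 / (2:ℝ) ^ k := fun k => by positivity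
  have hhalf : ∀ k : ℕ, R0 / (2:ℝ) ^ (k + 1) = (R0 / (2:ℝ) ^ k) / 2 := by
    intro k; rw [pow_succ]; ring
  -- the localization induction
  have key : ∀ k, k ≤ m →
      (∀ j, j < k → 2 ^ θ * a ≤ lam * (R0 / (2:ℝ) ^ j) ^ (θ - 1)) →
      ‖what k - wstar‖ ≤ R0 / (2:ℝ) ^ k := by
    intro k
    induction k with
    | zero => intro _ _; simpa using h0
    | succ n ih =>
      intro hkm hcond
      have hn : ‖what n - wstar‖ ≤ R0 / (2:ℝ) ^ n :=
        ih (by omega) (fun j hj => hcond j (by omega))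
      have hF : F (what (n + 1)) - F wstar ≤ R0 / (2:ℝ) ^ n * a := by
        have := hi (n + 1) (by omega) hkm (by simpa using hn)
        simpa using this
      have htnc := hTNC (what (n + 1))
      -- show lam * R_{n+1}^θ ≥ R_n * a
      have hstep : R0 / (2:ℝ) ^ n * a ≤ lam * (R0 / (2:ℝ) ^ (n + 1)) ^ θ := by
        have hc := hcond n (by omega)
        have hsplit : (R0 / (2:ℝ) ^ n) ^ θ
            = (R0 / (2:ℝ) ^ n) ^ (θ - 1) * (R0 / (2:ℝ) ^ n) := by
          rw [← Real.rpow_add_one (hRpos n).ne' (θ - 1)]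
          congr 1
          ring
        have hdiv : (R0 / (2:ℝ) ^ (n + 1)) ^ θ = (R0 / (2:ℝ) ^ n) ^ θ / 2 ^ θ := by
          rw [hhalf n, Real.div_rpow (hRpos n).le (by norm_num)]
        rw [hdiv, hsplit]
        have h2 := mul_le_mul_of_nonneg_right hc (hRpos n).le
        rw [show lam * ((R0 / (2:ℝ) ^ n) ^ (θ - 1) * (R0 / (2:ℝ) ^ n) / 2 ^ θ)
            = lam * (R0 / (2:ℝ) ^ n) ^ (θ - 1) * (R0 / (2:ℝ) ^ n) / 2 ^ θ from by ring,
          le_div_iff₀ (by positivity : (0:ℝ) < (2:ℝ) ^ θ)]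
        linarith
      have hpow : ‖what (n + 1) - wstar‖ ^ θ ≤ (R0 / (2:ℝ) ^ (n + 1)) ^ θ := by
        have h1 : lam * ‖what (n + 1) - wstar‖ ^ θ ≤ lam * (R0 / (2:ℝ) ^ (n + 1)) ^ θ := by
          linarith
        exact le_of_mul_le_mul_left h1 hlam
      by_contra hcon
      push_neg at hcon
      have := Real.rpow_lt_rpow (hRpos (n + 1)).le hcon hθ0
      linarith
  by_cases hall : ∀ j, j < m → 2 ^ θ * a ≤ lam * (R0 / (2:ℝ) ^ j) ^ (θ - 1)
  · -- Case A: localization holds through all phases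
    have hnorm : ‖what (m - 1) - wstar‖ ≤ R0 / (2:ℝ) ^ (m - 1) :=
      key (m - 1) (by omega) (fun j hj => hall j (by omega))
    have hF : F (what m) - F wstar ≤ R0 / (2:ℝ) ^ (m - 1) * a := hi m hm le_rfl hnorm
    -- bound lam * R_m^{θ-1} using hextra
    have hcond : lam * (R0 / (2:ℝ) ^ m) ^ (θ - 1) ≤ 2 ^ θ * a := by
      have e : (R0 / (2:ℝ) ^ m) ^ (θ - 1)
          = R0 ^ (θ - 1) * (2:ℝ) ^ (-((θ - 1) * (m:ℝ))) := by
        rw [Real.div_rpow hR0.le (by positivity), ← Real.rpow_natCast (2:ℝ) m,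
           ← Real.rpow_mul (by norm_num : (0:ℝ) ≤ 2), div_eq_mul_inv,
           ← Real.rpow_neg (by norm_num : (0:ℝ) ≤ 2)]
        ring_nf
      have hP : (0:ℝ) < R0 ^ (θ - 1) * (2:ℝ) ^ (-((θ - 1) * (m:ℝ))) := by positivity
      have h2 : lam * (R0 ^ (θ - 1) * (2:ℝ) ^ (-((θ - 1) * (m:ℝ))))
          ≤ (2 ^ ((θ - 1) * (m:ℝ) + 1) * R0 ^ (1 - θ) * a)
            * (R0 ^ (θ - 1) * (2:ℝ) ^ (-((θ - 1) * (m:ℝ)))) :=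
        mul_le_mul_of_nonneg_right hextra hP.le
      have h3 : (2 ^ ((θ - 1) * (m:ℝ) + 1) * R0 ^ (1 - θ) * a)
            * (R0 ^ (θ - 1) * (2:ℝ) ^ (-((θ - 1) * (m:ℝ)))) = 2 * a := by
        rw [show (2 ^ ((θ - 1) * (m:ℝ) + 1) * R0 ^ (1 - θ) * a)
            * (R0 ^ (θ - 1) * (2:ℝ) ^ (-((θ - 1) * (m:ℝ))))
          = ((2:ℝ) ^ ((θ - 1) * (m:ℝ) + 1) * (2:ℝ) ^ (-((θ - 1) * (m:ℝ))))
            * (R0 ^ (1 - θ) * R0 ^ (θ - 1)) * a from by ring,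
          ← Real.rpow_add (by norm_num : (0:ℝ) < 2), ← Real.rpow_add hR0]
        norm_num
      have h4 : (2:ℝ) * a ≤ 2 ^ θ * a := by
        have : (2:ℝ) ^ (1:ℝ) ≤ 2 ^ θ :=
          Real.rpow_le_rpow_left_iff (by norm_num : (1:ℝ) < 2) |>.mpr hθ.le
        rw [Real.rpow_one] at this
        nlinarith
      rw [e]; linarith
    have hX : F (what m) - F wstar ≤ 2 * (R0 / (2:ℝ) ^ m) * a := by
      have hp : (2:ℝ) ^ m = 2 * (2:ℝ) ^ (m - 1) := by
        conv_lhs => rw [show m = m - 1 + 1 from by omega]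
        rw [pow_succ]; ring
      have he : R0 / (2:ℝ) ^ (m - 1) = 2 * (R0 / (2:ℝ) ^ m) := by
        rw [hp]; ring
      rw [he] at hF; linarith
    exact aux_final θ lam a (R0 / (2:ℝ) ^ m) _ hθ hlam ha (hRpos m) hcond hX
  · -- Case B: localization breaks at some phase
    push_neg at hall
    have hex : ∃ j, j < m ∧ lam * (R0 / (2:ℝ) ^ j) ^ (θ - 1) < 2 ^ θ * a := hall
    set j0 := Nat.find hex with hj0def
    obtain ⟨hj0m, hj0lt⟩ := Nat.find_spec hex
    have hmin : ∀ j, j < j0 → 2 ^ θ * a ≤ lam * (R0 / (2:ℝ) ^ j) ^ (θ - 1) := by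
      intro j hj
      have := Nat.find_min hex hj
      push_neg at this
      exact this (by omega)
    have hnorm : ‖what j0 - wstar‖ ≤ R0 / (2:ℝ) ^ j0 := key j0 (by omega) hmin
    have h1 : F (what (j0 + 1)) - F wstar ≤ R0 / (2:ℝ) ^ j0 * a := by
      have := hi (j0 + 1) (by omega) (by omega) (by simpa using hnorm)
      simpa using this
    have claim : ∀ n, j0 + 1 ≤ n → n ≤ m →
        F (what n) - F wstar ≤ 2 * (R0 / (2:ℝ) ^ j0) * a - 2 * (R0 / (2:ℝ) ^ n) * a := by
      intro n
      induction n with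
      | zero => omega
      | succ n ih =>
        intro hlo hhi
        rcases Nat.lt_or_ge j0 n with hlt | hge
        · have hbn := ih (by omega) (by omega)
          have hstep := hii (n + 1) (by omega) hhi
          simp only [Nat.add_sub_cancel] at hstep
          have he : R0 / (2:ℝ) ^ n = 2 * (R0 / (2:ℝ) ^ (n + 1)) := by
            rw [hhalf n]; ring
          rw [he] at hstep hbn
          linarith
        · have hn : n = j0 := by omega
          subst hn
          have he : R0 / (2:ℝ) ^ j0 = 2 * (R0 / (2:ℝ) ^ (j0 + 1)) := by
            rw [hhalf j0]; ring
          rw [he] at h1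
          rw [he]
          linarith
    have hX : F (what m) - F wstar ≤ 2 * (R0 / (2:ℝ) ^ j0) * a := by
      have := claim m (by omega) le_rfl
      have hp : (0:ℝ) < 2 * (R0 / (2:ℝ) ^ m) * a := by positivity
      linarith
    exact aux_final θ lam a (R0 / (2:ℝ) ^ j0) _ hθ hlam ha (hRpos j0) hj0lt.le hX
end
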